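/- Let N ≥ 1 and for each i let ω_i > 0, λ_i ∈ (0,1], p_i ∈ (0,1]. With μ_i' = √(ω_i/(λ_i p_i)) / ∑_j √(ω_j/(λ_j p_j)), the bound (1/N)∑_{i=1}^N ω_i(1/(λ_i μ_i' p_i) + 1) ≤ (1/N)[ (∑_i √(ω_i/(λ_i p_i)))² + ∑_i ω_i/λ_i ] holds, where the right-hand side equals the Randomized Scheduling AoI R^{RSM} with scheduling probabilities μ_i^M = √(ω_i λ_i / p_i) / ∑_j √(ω_j/(λ_j p_j)). -/

import Mathlib

theorem stmt_9 (N : ℕ) (hN : 1 ≤ N) (ω lam p : Fin N → ℝ)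
    (hω : ∀ i, 0 < ω i) (hlam : ∀ i, 0 < lam i ∧ lam i ≤ 1)
    (hp : ∀ i, 0 < p i ∧ p i ≤ 1)
    (μ' μM : Fin N → ℝ)
    (hμ' : ∀ i, μ' i
      = Real.sqrt (ω i / (lam i * p i)) / ∑ j, Real.sqrt (ω j / (lam j * p j)))
    (hμM : ∀ i, μM i
      = Real.sqrt (ω i * lam i / p i) / ∑ j, Real.sqrt (ω j / (lam j * p j))) :
    ((1 / (N : ℝ)) * ∑ i, ω i * (1 / (lam i * μ' i * p i) + 1)
      ≤ (1 / (N : ℝ)) * ((∑ i, Real.sqrt (ω i / (lam i * p i))) ^ 2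
          + ∑ i, ω i / lam i)) ∧
    ((1 / (N : ℝ)) * ((∑ i, Real.sqrt (ω i / (lam i * p i))) ^ 2
          + ∑ i, ω i / lam i)
      = (1 / (N : ℝ)) * ∑ i, ω i * (1 / lam i + 1 / (p i * μM i))) := by
  set S := ∑ j, Real.sqrt (ω j / (lam j * p j)) with hS
  have hterm : ∀ i, 0 < Real.sqrt (ω i / (lam i * p i)) := fun i =>
    Real.sqrt_pos.mpr (div_pos (hω i) (mul_pos (hlam i).1 (hp i).1))
  have hSpos : 0 < S := by
    have h0 : (0 : ℕ) < N := hN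
    exact Finset.sum_pos (fun i _ => hterm i) (by
      simpa [Finset.univ_nonempty_iff] using Fin.pos_iff_nonempty.mp h0)
  have hNpos : (0 : ℝ) < (1 / (N : ℝ)) := by
    have : (0 : ℝ) < (N : ℝ) := by exact_mod_cast hN
    positivity
  have hsq : ∀ i, Real.sqrt (ω i / (lam i * p i)) ^ 2 = ω i / (lam i * p i) :=
    fun i => Real.sq_sqrt (le_of_lt (div_pos (hω i) (mul_pos (hlam i).1 (hp i).1)))
  -- key identity 1 : ω i / (lam i * μ' i * p i) = S * sqrt term
  have key1 : ∀ i, ω i * (1 / (lam i * μ' i * p i))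
      = S * Real.sqrt (ω i / (lam i * p i)) := by
    intro i
    rw [hμ' i]
    have h1 := hterm i
    have h2 := (hlam i).1
    have h3 := (hp i).1
    set t := Real.sqrt (ω i / (lam i * p i)) with hts
    have h4 : t ^ 2 = ω i / (lam i * p i) := hsq i
    have h4' : ω i = t ^ 2 * (lam i * p i) := by
      rw [h4]; field_simp
    clear_value t
    rw [h4']
    field_simp
  -- key identity 2 : ω i / (p i * μM i) = S * sqrt term
  have key2 : ∀ i, ω i * (1 / (p i * μM i))
      = S * Real.sqrt (ω i / (lam i * p i)) := by
    intro i
    rw [hμM i]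
    have h1 := hterm i
    have h2 := (hlam i).1
    have h3 := (hp i).1
    have h5 : Real.sqrt (ω i * lam i / p i)
        = Real.sqrt (ω i / (lam i * p i)) * lam i := by
      have heq : ω i * lam i / p i = (ω i / (lam i * p i)) * lam i ^ 2 := by
        field_simp
      rw [heq, Real.sqrt_mul (le_of_lt (div_pos (hω i) (mul_pos h2 h3))),
        Real.sqrt_sq (le_of_lt h2)]
    rw [h5]
    set t := Real.sqrt (ω i / (lam i * p i)) with hts
    have h4 : t ^ 2 = ω i / (lam i * p i) := hsq i
    have h4' : ω i = t ^ 2 * (lam i * p i) := by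
      rw [h4]; field_simp
    clear_value t
    rw [h4']
    field_simp
  have hsum : ∀ i ∈ Finset.univ, ω i * (1 / (lam i * μ' i * p i))
      = S * Real.sqrt (ω i / (lam i * p i)) := fun i _ => key1 i
  have hSsq : ∑ i, ω i * (1 / (lam i * μ' i * p i)) = S ^ 2 := by
    rw [Finset.sum_congr rfl hsum, ← Finset.mul_sum, ← hS, sq]
  have hSsq2 : ∑ i, ω i * (1 / (p i * μM i)) = S ^ 2 := by
    rw [Finset.sum_congr rfl (fun i _ => key2 i), ← Finset.mul_sum, ← hS, sq]
  constructor
  · apply mul_le_mul_of_nonneg_left _ (le_of_lt hNpos)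
    have : ∑ i, ω i * (1 / (lam i * μ' i * p i) + 1)
        = (∑ i, ω i * (1 / (lam i * μ' i * p i))) + ∑ i, ω i := by
      rw [← Finset.sum_add_distrib]
      exact Finset.sum_congr rfl fun i _ => by ring
    rw [this, hSsq]
    apply add_le_add_right
    apply Finset.sum_le_sum
    intro i _
    rw [div_eq_mul_inv]
    nth_rewrite 1 [← mul_one (ω i)]
    exact mul_le_mul_of_nonneg_left (one_le_inv_iff₀.mpr ⟨(hlam i).1, (hlam i).2⟩)
      (le_of_lt (hω i))
  · congr 1
    have : ∑ i, ω i * (1 / lam i + 1 / (p i * μM i))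
        = (∑ i, ω i / lam i) + ∑ i, ω i * (1 / (p i * μM i)) := by
      rw [← Finset.sum_add_distrib]
      exact Finset.sum_congr rfl fun i _ => by ring
    rw [this, hSsq2]
    ring
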